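/- Let p be a full-support joint probability mass function on the variables (S, A, S') whose next-step state variables are mutually conditionally independent given the current-step variables, i.e. p(s' | s, a) = ∏_{j=1}^{n_s} p(s'_j | s, a) for every configuration. If G is a directed acyclic graph on the variables (S, A, S') such that p is compatible with G and faithful to G, then G contains no edge between two distinct next-step state variables S'_j and S'_k. -/

import Mathlib

open Finset

noncomputable section

/-- Marginal probability that a configuration agrees with `x` on the coordinates in `E`. -/
def marg {V : Type*} [Fintype V] [DecidableEq V] {val : V → Type*}
    [∀ v, Fintype (val v)] [∀ v, DecidableEq (val v)]
    (p : (∀ v, val v) → ℝ) (E : Finset V) (x : ∀ v, val v) : ℝ :=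
  ∑ y : ∀ v, val v, if ∀ v ∈ E, y v = x v then p y else 0

/-- Conditional probability of the value of coordinate `v` given the values of `P`. -/
def condP {V : Type*} [Fintype V] [DecidableEq V] {val : V → Type*}
    [∀ v, Fintype (val v)] [∀ v, DecidableEq (val v)]
    (p : (∀ v, val v) → ℝ) (v : V) (P : Finset V) (x : ∀ v, val v) : ℝ :=
  marg p (insert v P) x / marg p P x

/-- Conditional independence X ⊥ Y | Z, in cross-multiplied form. -/
def CondIndep {V : Type*} [Fintype V] [DecidableEq V] {val : V → Type*}
    [∀ v, Fintype (val v)] [∀ v, DecidableEq (val v)]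
    (p : (∀ v, val v) → ℝ) (X Y Z : Finset V) : Prop :=
  ∀ x : ∀ v, val v,
    marg p (X ∪ Y ∪ Z) x * marg p Z x = marg p (X ∪ Z) x * marg p (Y ∪ Z) x

/-- Variables of an FMDP: states, actions, next states. -/
abbrev FVar (ns na : ℕ) := Fin ns ⊕ (Fin na ⊕ Fin ns)

/-- Value types of FMDP variables. -/
def fv {ns na : ℕ} (Sv : Fin ns → Type) (Av : Fin na → Type) : FVar ns na → Type :=
  Sum.elim Sv (Sum.elim Av Sv)

instance {ns na : ℕ} (Sv : Fin ns → Type) (Av : Fin na → Type)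
    [∀ i, Fintype (Sv i)] [∀ j, Fintype (Av j)] : ∀ v, Fintype (fv Sv Av v)
  | .inl i => inferInstanceAs (Fintype (Sv i))
  | .inr (.inl j) => inferInstanceAs (Fintype (Av j))
  | .inr (.inr k) => inferInstanceAs (Fintype (Sv k))

instance {ns na : ℕ} (Sv : Fin ns → Type) (Av : Fin na → Type)
    [∀ i, DecidableEq (Sv i)] [∀ j, DecidableEq (Av j)] : ∀ v, DecidableEq (fv Sv Av v)
  | .inl i => inferInstanceAs (DecidableEq (Sv i))
  | .inr (.inl j) => inferInstanceAs (DecidableEq (Av j))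
  | .inr (.inr k) => inferInstanceAs (DecidableEq (Sv k))

/-- The set of current-step coordinates. -/
def curSet (ns na : ℕ) : Finset (FVar ns na) :=
  (Finset.univ.image (Sum.inl : Fin ns → FVar ns na)) ∪
    (Finset.univ.image (fun j : Fin na => (Sum.inr (Sum.inl j) : FVar ns na)))

/-- A joint pmf `p` on (S, A, S') is consistent with the transition kernel `T`. -/
def FConsistent {ns na : ℕ} {Sv : Fin ns → Type} {Av : Fin na → Type}
    [∀ i, Fintype (Sv i)] [∀ j, Fintype (Av j)]
    [∀ i, DecidableEq (Sv i)] [∀ j, DecidableEq (Av j)]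
    (p : (∀ v, fv Sv Av v) → ℝ)
    (T : (∀ i, Sv i) → (∀ j, Av j) → (∀ k, Sv k) → ℝ) : Prop :=
  ∀ x, p x = marg p (curSet ns na) x *
    T (fun i => x (.inl i)) (fun j => x (.inr (.inl j))) (fun k => x (.inr (.inr k)))

/-- An undirected path in a directed graph: consecutive vertices joined by an edge
in either direction, with no repeated vertex. -/
def IsUndirPath {V : Type*} (E : V → V → Prop) (l : List V) : Prop :=
  l.Chain' (fun a b => E a b ∨ E b a) ∧ l.Nodup

/-- A path is blocked by `Z`: it contains a chain or fork whose middle vertex is in `Z`,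
or a collider such that neither the middle vertex nor any of its descendants is in `Z`. -/
def BlockedPath {V : Type*} (E : V → V → Prop) (Z : Set V) (l : List V) : Prop :=
  ∃ (l₁ l₂ : List V) (a b c : V), l = l₁ ++ a :: b :: c :: l₂ ∧
    ((((E a b ∧ E b c) ∨ (E c b ∧ E b a) ∨ (E b a ∧ E b c)) ∧ b ∈ Z) ∨
     ((E a b ∧ E c b) ∧ b ∉ Z ∧ ∀ d, Relation.TransGen E b d → d ∉ Z))

/-- `X` and `Y` are d-separated by `Z`: every undirected path from a vertex of `X`
to a vertex of `Y` is blocked by `Z`. -/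
def DSeparated {V : Type*} (E : V → V → Prop) (X Y Z : Set V) : Prop :=
  ∀ l : List V, IsUndirPath E l →
    (∃ u ∈ X, l.head? = some u) → (∃ w ∈ Y, l.getLast? = some w) →
    BlockedPath E Z l

/-- The graph is acyclic. -/
def Acyclic {V : Type*} (E : V → V → Prop) : Prop :=
  ∀ v, ¬ Relation.TransGen E v v

/-- `p` is faithful to the DAG: every conditional independence between disjoint sets
of variables is a d-separation. -/
def FaithfulTo {V : Type*} [Fintype V] [DecidableEq V] {val : V → Type*}
    [∀ v, Fintype (val v)] [∀ v, DecidableEq (val v)]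
    (p : (∀ v, val v) → ℝ) (E : V → V → Prop) : Prop :=
  ∀ X Y Z : Finset V, Disjoint X Y → Disjoint X Z → Disjoint Y Z →
    CondIndep p X Y Z → DSeparated E ↑X ↑Y ↑Z

/-- `p` is compatible with the DAG: it factorizes as the product over all variables of
the conditional probabilities given the graph parents. -/
def CompatibleWith {V : Type*} [Fintype V] [DecidableEq V] {val : V → Type*}
    [∀ v, Fintype (val v)] [∀ v, DecidableEq (val v)]
    (p : (∀ v, val v) → ℝ) (E : V → V → Prop) [DecidableRel E] : Prop :=
  ∀ x, p x = ∏ v, condP p v (Finset.univ.filter (fun u => E u v)) x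


section Aux

variable {V : Type*} [Fintype V] [DecidableEq V] {val : V → Type*}
    [∀ v, Fintype (val v)] [∀ v, DecidableEq (val v)]
    (p : (∀ v, val v) → ℝ)

lemma marg_pos (hpos : ∀ x, 0 < p x) (E : Finset V) (x : ∀ v, val v) :
    0 < marg p E x := by
  unfold marg
  apply Finset.sum_pos'
  · intro y _
    split
    · exact (hpos y).le
    · exact le_rfl
  · exact ⟨x, Finset.mem_univ x, by simp [hpos x]⟩

lemma marg_congr {E : Finset V} {x y : ∀ v, val v} (h : ∀ v ∈ E, x v = y v) :
    marg p E x = marg p E y := by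
  unfold marg
  refine Finset.sum_congr rfl fun z _ => ?_
  refine if_congr ⟨fun hz v hv => (hz v hv).trans (h v hv),
    fun hz v hv => (hz v hv).trans (h v hv).symm⟩ rfl rfl

lemma marg_sum_update {E : Finset V} {v : V} (hv : v ∉ E) (x : ∀ v, val v) :
    ∑ s : val v, marg p (insert v E) (Function.update x v s) = marg p E x := by
  unfold marg
  rw [Finset.sum_comm]
  refine Finset.sum_congr rfl fun y _ => ?_
  have hA : ∀ s : val v,
      (∀ u ∈ insert v E, y u = Function.update x v s u) ↔
        (y v = s ∧ ∀ u ∈ E, y u = x u) := by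
    intro s
    constructor
    · intro h
      refine ⟨by simpa using h v (Finset.mem_insert_self v E), fun u hu => ?_⟩
      have := h u (Finset.mem_insert_of_mem hu)
      rwa [Function.update_of_ne (fun h' : u = v => hv (h' ▸ hu))] at this
    · rintro ⟨h1, h2⟩ u hu
      rcases Finset.mem_insert.mp hu with rfl | hu
      · simpa using h1
      · rw [Function.update_of_ne (fun h' : u = v => hv (h' ▸ hu))]; exact h2 u hu
  calc ∑ s : val v, (if ∀ u ∈ insert v E, y u = Function.update x v s u then p y else 0)
      = ∑ s : val v, (if y v = s then (if ∀ u ∈ E, y u = x u then p y else 0) else 0) := by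
        refine Finset.sum_congr rfl fun s _ => ?_
        rw [if_congr (hA s) rfl rfl, ite_and]
    _ = if ∀ u ∈ E, y u = x u then p y else 0 := by
        rw [Finset.sum_ite_eq]; simp

end Aux

/-- If the next-step variables are mutually conditionally independent given
the current-step variables under a full-support pmf `p`, then any DAG that `p` is compatible
with and faithful to contains no edge between two distinct next-step variables. -/
theorem faithful_dag_has_no_lateral_next_step_edges
    {ns na : ℕ} (Sv : Fin ns → Type) (Av : Fin na → Type)
    [∀ i, Fintype (Sv i)] [∀ i, DecidableEq (Sv i)] [∀ i, Nonempty (Sv i)]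
    [∀ j, Fintype (Av j)] [∀ j, DecidableEq (Av j)] [∀ j, Nonempty (Av j)]
    (p : (∀ v, fv Sv Av v) → ℝ)
    (hpos : ∀ x, 0 < p x) (hsum : ∑ x, p x = 1)
    -- p(s' | s, a) = ∏ⱼ p(s'ⱼ | s, a)
    (hci : ∀ x, p x / marg p (curSet ns na) x =
      ∏ k, condP p (.inr (.inr k)) (curSet ns na) x)
    (E : FVar ns na → FVar ns na → Prop) [DecidableRel E]
    (hacyc : Acyclic E) (hcompat : CompatibleWith p E) (hfaith : FaithfulTo p E) :
    ∀ j k : Fin ns, j ≠ k →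
      ¬ E (.inr (.inr j) : FVar ns na) (.inr (.inr k)) := by
  intro j k hjk hE
  classical
  set C := curSet ns na with hC
  set ι : Fin ns → FVar ns na := fun m => Sum.inr (Sum.inr m) with hι
  have hιinj : Function.Injective ι := by
    intro a b h
    simpa [hι] using h
  have hιC : ∀ m, ι m ∉ C := by
    intro m
    simp [hC, curSet, hι]
  have hM : ∀ x, marg p C x ≠ 0 := fun x => (marg_pos p hpos C x).ne'
  -- key marginalization lemma
  have keyG : ∀ G : Finset (Fin ns), ∀ x,
      marg p (C ∪ (Finset.univ \ G).image ι) x =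
        marg p C x * ∏ m ∈ Finset.univ \ G, condP p (ι m) C x := by
    intro G
    induction G using Finset.induction_on with
    | empty =>
      intro x
      have huniv : C ∪ ((Finset.univ : Finset (Fin ns)) \ ∅).image ι = Finset.univ := by
        apply Finset.eq_univ_of_forall
        intro v
        rcases v with i | (a | m)
        · exact Finset.mem_union_left _ (by simp [hC, curSet])
        · exact Finset.mem_union_left _ (by simp [hC, curSet])
        · exact Finset.mem_union_right _ (by simp [hι])
      rw [huniv, Finset.sdiff_empty]
      have hmu : marg p Finset.univ x = p x := by
        unfold marg
        have : ∀ y : ∀ v, fv Sv Av v,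
            (if ∀ v ∈ Finset.univ, y v = x v then p y else 0) =
              (if y = x then p y else 0) := by
          intro y
          refine if_congr ?_ rfl rfl
          simp [funext_iff]
        rw [Finset.sum_congr rfl fun y _ => this y, Finset.sum_ite_eq']
        simp
      rw [hmu]
      have h1 := hci x
      rw [div_eq_iff (hM x)] at h1
      rw [h1]; ring
    | insert a G ha ih =>
      intro x
      have haF : a ∈ Finset.univ \ G := by simp [ha]
      have hset : (Finset.univ : Finset (Fin ns)) \ insert a G =
          ((Finset.univ : Finset (Fin ns)) \ G).erase a := by
        rw [Finset.sdiff_insert]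
      rw [hset]
      set F := (Finset.univ : Finset (Fin ns)) \ G with hF
      set F' := F.erase a with hF'
      have hins : insert (ι a) (C ∪ F'.image ι) = C ∪ F.image ι := by
        rw [← Finset.union_insert, ← Finset.image_insert, Finset.insert_erase haF]
      have hnot : ι a ∉ C ∪ F'.image ι := by
        simp only [Finset.mem_union, Finset.mem_image, not_or]
        refine ⟨hιC a, ?_⟩
        rintro ⟨m, hm, he⟩
        have : m = a := hιinj he
        subst this
        exact (Finset.mem_erase.mp hm).1 rfl
      have hupC : ∀ (s : Sv a) (v), v ∈ C → Function.update x (ι a) s v = x v := by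
        intro s v hv
        exact Function.update_of_ne (fun h' : v = ι a => hιC a (h' ▸ hv)) _ _
      rw [← marg_sum_update p hnot x]
      simp only [hins]
      have hterm : ∀ s : fv Sv Av (ι a),
          marg p (C ∪ F.image ι) (Function.update x (ι a) s) =
            (marg p C x * ∏ m ∈ F', condP p (ι m) C x) *
              condP p (ι a) C (Function.update x (ι a) s) := by
        intro s
        rw [ih (Function.update x (ι a) s)]
        have h1 : marg p C (Function.update x (ι a) s) = marg p C x :=
          marg_congr p (fun v hv => hupC s v hv)
        have h2 : ∏ m ∈ F, condP p (ι m) C (Function.update x (ι a) s) =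
            condP p (ι a) C (Function.update x (ι a) s) *
              ∏ m ∈ F', condP p (ι m) C x := by
          rw [← Finset.mul_prod_erase F _ haF, ← hF']
          congr 1
          refine Finset.prod_congr rfl fun m hm => ?_
          have hma : m ≠ a := (Finset.mem_erase.mp hm).1
          unfold condP
          have e1 : marg p (insert (ι m) C) (Function.update x (ι a) s) =
              marg p (insert (ι m) C) x := by
            refine marg_congr p fun v hv => ?_
            rcases Finset.mem_insert.mp hv with rfl | hv
            · exact Function.update_of_ne (fun h' => hma (hιinj h')) _ _
            · exact hupC s v hv
          rw [e1, marg_congr p (fun v hv => hupC s v hv)]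
        rw [h1, h2]; ring
      rw [Finset.sum_congr rfl fun s _ => hterm s, ← Finset.mul_sum]
      have hsum1 : ∑ s : fv Sv Av (ι a), condP p (ι a) C (Function.update x (ι a) s) = 1 := by
        unfold condP
        have : ∀ s : fv Sv Av (ι a), marg p (insert (ι a) C) (Function.update x (ι a) s) /
            marg p C (Function.update x (ι a) s) =
            marg p (insert (ι a) C) (Function.update x (ι a) s) / marg p C x := by
          intro s
          rw [marg_congr p (fun v hv => hupC s v hv)]
        rw [Finset.sum_congr rfl fun s _ => this s, ← Finset.sum_div,
          marg_sum_update p (hιC a) x, div_self (hM x)]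
      rw [hsum1, mul_one]
  have key : ∀ F : Finset (Fin ns), ∀ x,
      marg p (C ∪ F.image ι) x = marg p C x * ∏ m ∈ F, condP p (ι m) C x := by
    intro F x
    have := keyG (Finset.univ \ F) x
    have e : (Finset.univ : Finset (Fin ns)) \ (Finset.univ \ F) = F := by simp
    rwa [e] at this
  have hCI : CondIndep p {ι j} {ι k} C := by
    intro x
    have e1 : ({ι j} ∪ {ι k} ∪ C : Finset (FVar ns na)) =
        C ∪ ({j, k} : Finset (Fin ns)).image ι := by
      ext v; simp [Finset.mem_union, Finset.mem_image]
    have e2 : ({ι j} ∪ C : Finset (FVar ns na)) =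
        C ∪ ({j} : Finset (Fin ns)).image ι := by
      ext v; simp [Finset.mem_union]
    have e3 : ({ι k} ∪ C : Finset (FVar ns na)) =
        C ∪ ({k} : Finset (Fin ns)).image ι := by
      ext v; simp [Finset.mem_union]
    rw [e1, e2, e3, key, key, key, Finset.prod_pair hjk,
      Finset.prod_singleton, Finset.prod_singleton]
    ring
  have hιjk : ι j ≠ ι k := fun h => hjk (hιinj h)
  have hdsep := hfaith {ι j} {ι k} C
    (Finset.disjoint_singleton.mpr hιjk)
    (Finset.disjoint_singleton_left.mpr (hιC j))
    (Finset.disjoint_singleton_left.mpr (hιC k)) hCI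
  have hpath : IsUndirPath E [ι j, ι k] := by
    constructor
    · exact List.isChain_pair.mpr (Or.inl hE)
    · simp [hιjk]
  have hblock := hdsep [ι j, ι k] hpath ⟨ι j, by simp, rfl⟩ ⟨ι k, by simp, by simp⟩
  obtain ⟨l₁, l₂, a, b, c, hl, -⟩ := hblock
  have := congrArg List.length hl
  simp [List.length_append] at this
  omega
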